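/- For every i ∈ I, the operators e_i and f_i on V₁ are nilpotent with e_i⁴ = 0 and f_i⁴ = 0. -/

import Mathlib

open scoped RealInnerProductSpace

/-- A finite, reduced, irreducible, crystallographic root system `R` spanning a
finite-dimensional real inner product space `E`, together with a base of simple
roots indexed by `I`, the integral Cartan pairing `pair`, and for each simple
root `αᵢ` and each root `α` not proportional to `αᵢ` the chain lengths
`p i α`, `q i α` (largest `n ≥ 0` with `α + n αᵢ`, resp. `α - n αᵢ`, a root). -/
structure RootSystemData (E : Type) [NormedAddCommGroup E] [InnerProductSpace ℝ E]
    [FiniteDimensional ℝ E] (I : Type) [Fintype I] : Type where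
  R : Set E
  finite : R.Finite
  zero_not_mem : (0 : E) ∉ R
  spans : Submodule.span ℝ R = ⊤
  neg_mem : ∀ α ∈ R, -α ∈ R
  reduced : ∀ α ∈ R, ∀ r : ℝ, r • α ∈ R → r = 1 ∨ r = -1
  pair : E → E → ℤ
  pair_def : ∀ α ∈ R, ∀ β ∈ R, (pair α β : ℝ) * ⟪α, α⟫ = 2 * ⟪α, β⟫
  reflect_mem : ∀ α ∈ R, ∀ β ∈ R, β - (pair α β : ℝ) • α ∈ R
  irreducible : ∀ R₁ R₂ : Set E, R = R₁ ∪ R₂ →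
    (∀ α ∈ R₁, ∀ β ∈ R₂, ⟪α, β⟫ = 0) → R₁ = ∅ ∨ R₂ = ∅
  simple : I → E
  simple_mem : ∀ i, simple i ∈ R
  simple_indep : LinearIndependent ℝ simple
  simple_gen : ∀ α ∈ R,
    (∃ c : I → ℕ, α = ∑ i, (c i : ℝ) • simple i) ∨
    (∃ c : I → ℕ, α = -(∑ i, (c i : ℝ) • simple i))
  p : I → E → ℕ
  q : I → E → ℕ
  p_mem : ∀ i, ∀ α ∈ R, (∀ r : ℝ, α ≠ r • simple i) →
    ∀ k : ℕ, k ≤ p i α → α + (k : ℝ) • simple i ∈ R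
  p_max : ∀ i, ∀ α ∈ R, (∀ r : ℝ, α ≠ r • simple i) →
    α + ((p i α : ℝ) + 1) • simple i ∉ R
  q_mem : ∀ i, ∀ α ∈ R, (∀ r : ℝ, α ≠ r • simple i) →
    ∀ k : ℕ, k ≤ q i α → α - (k : ℝ) • simple i ∈ R
  q_max : ∀ i, ∀ α ∈ R, (∀ r : ℝ, α ≠ r • simple i) →
    α - ((q i α : ℝ) + 1) • simple i ∉ R

theorem inner_sq_lt {E : Type} [NormedAddCommGroup E] [InnerProductSpace ℝ E] (x y : E)
    (hx : x ≠ 0) (h : ∀ r : ℝ, y ≠ r • x) : ⟪x, y⟫ * ⟪x, y⟫ < ⟪x, x⟫ * ⟪y, y⟫ := by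
  have key : ∀ z : E, (∀ r : ℝ, z ≠ r • x) → ⟪x, z⟫ < ‖x‖ * ‖z‖ := by
    intro z hz
    rw [inner_lt_norm_mul_iff_real]
    intro hc
    have h2 := congrArg (fun v => (‖x‖⁻¹ : ℝ) • v) hc
    simp only [smul_smul] at h2
    rw [inv_mul_cancel₀ (norm_ne_zero_iff.2 hx), one_smul] at h2
    exact hz (‖x‖⁻¹ * ‖z‖) h2.symm
  have h1 := key y h
  have h2 := key (-y) (fun r hr => h (-r) (by rw [neg_smul, ← hr, neg_neg]))
  rw [inner_neg_right, norm_neg] at h2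
  have hxx : ⟪x, x⟫ = ‖x‖ * ‖x‖ := real_inner_self_eq_norm_mul_norm x
  have hyy : ⟪y, y⟫ = ‖y‖ * ‖y‖ := real_inner_self_eq_norm_mul_norm y
  nlinarith [norm_nonneg x, norm_nonneg y]

section
variable {E : Type} [NormedAddCommGroup E] [InnerProductSpace ℝ E]
  [FiniteDimensional ℝ E] {I : Type} [Fintype I]

theorem RootSystemData.mem_ne_zero (D : RootSystemData E I) {α : E} (h : α ∈ D.R) : α ≠ 0 :=
  fun h0 => D.zero_not_mem (h0 ▸ h)

theorem RootSystemData.inner_self_pos (D : RootSystemData E I) {α : E} (h : α ∈ D.R) :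
    0 < ⟪α, α⟫ := by
  rw [real_inner_self_eq_norm_mul_norm]
  exact mul_pos (norm_pos_iff.2 (D.mem_ne_zero h)) (norm_pos_iff.2 (D.mem_ne_zero h))

theorem RootSystemData.pair_abs_le (D : RootSystemData E I) {β γ : E} (hβ : β ∈ D.R)
    (hγ : γ ∈ D.R) (hne : ∀ r : ℝ, γ ≠ r • β) : |D.pair β γ| ≤ 3 := by
  set a := D.pair β γ with ha
  set b := D.pair γ β with hb
  have hda : (a : ℝ) * ⟪β, β⟫ = 2 * ⟪β, γ⟫ := D.pair_def β hβ γ hγ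
  have hdb : (b : ℝ) * ⟪γ, γ⟫ = 2 * ⟪γ, β⟫ := D.pair_def γ hγ β hβ
  have hcomm : ⟪γ, β⟫ = ⟪β, γ⟫ := real_inner_comm β γ
  have hpβ := D.inner_self_pos hβ
  have hpγ := D.inner_self_pos hγ
  have hcs : ⟪β, γ⟫ * ⟪β, γ⟫ < ⟪β, β⟫ * ⟪γ, γ⟫ := inner_sq_lt β γ (D.mem_ne_zero hβ) hne
  have hab4 : ((a * b : ℤ) : ℝ) < 4 := by
    push_cast
    rw [← mul_lt_mul_iff_of_pos_right (mul_pos hpβ hpγ)]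
    calc (a : ℝ) * b * (⟪β, β⟫ * ⟪γ, γ⟫) = ((a:ℝ) * ⟪β, β⟫) * ((b:ℝ) * ⟪γ, γ⟫) := by ring
    _ = (2 * ⟪β, γ⟫) * (2 * ⟪β, γ⟫) := by rw [hda, hdb, hcomm]
    _ < 4 * (⟪β, β⟫ * ⟪γ, γ⟫) := by nlinarith
  have hab : a * b < 4 := by exact_mod_cast hab4
  have habnn : 0 ≤ a * b := by
    have : (0:ℝ) ≤ (a:ℝ) * b := by
      rw [← mul_le_mul_iff_of_pos_right (mul_pos hpβ hpγ)]
      calc (0:ℝ) * (⟪β, β⟫ * ⟪γ, γ⟫) = 0 := by ring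
      _ ≤ (2 * ⟪β, γ⟫) * (2 * ⟪β, γ⟫) := mul_self_nonneg _
      _ = (a : ℝ) * b * (⟪β, β⟫ * ⟪γ, γ⟫) := by
          rw [show (a:ℝ) * b * (⟪β, β⟫ * ⟪γ, γ⟫) = ((a:ℝ) * ⟪β, β⟫) * ((b:ℝ) * ⟪γ, γ⟫) by ring,
            hda, hdb, hcomm]
    exact_mod_cast this
  rcases eq_or_ne a 0 with h0 | h0
  · simp [h0]
  · have hinn : ⟪β, γ⟫ ≠ 0 := by
      intro hz
      rw [hz, mul_zero] at hda
      exact h0 (by exact_mod_cast (mul_eq_zero.mp hda).resolve_right hpβ.ne')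
    have hbne : b ≠ 0 := by
      intro hz
      rw [hz] at hdb
      push_cast at hdb
      rw [zero_mul, hcomm] at hdb
      exact hinn (by linarith)
    have h1b : 1 ≤ |b| := Int.one_le_abs hbne
    calc |a| ≤ |a| * |b| := le_mul_of_one_le_right (abs_nonneg a) h1b
    _ = |a * b| := (abs_mul a b).symm
    _ = a * b := abs_of_nonneg habnn
    _ ≤ 3 := by omega

end

noncomputable section

variable {E : Type} [NormedAddCommGroup E] [InnerProductSpace ℝ E]
  [FiniteDimensional ℝ E] {I : Type} [Fintype I]

/-- The `ℚ`-vector space `V₁` with basis `{X_α : α ∈ R} ∪ {t_i : i ∈ I}`. -/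
abbrev V1 (D : RootSystemData E I) : Type := ({x : E // x ∈ D.R} ⊕ I) →₀ ℚ

/-- The basis vector `X_α` of `V₁`, for a root `α`. -/
def X1 (D : RootSystemData E I) (a : {x : E // x ∈ D.R}) : V1 D :=
  Finsupp.single (Sum.inl a) 1

/-- The basis vector `t_j` of `V₁`, for `j ∈ I`. -/
def t1 (D : RootSystemData E I) (j : I) : V1 D :=
  Finsupp.single (Sum.inr j) 1

open Classical in
/-- The operator `e_i` on `V₁`: `e_i X_α = (q_{i,α}+1) X_{α+αᵢ}` if `α+αᵢ ∈ R`,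
`e_i X_{-αᵢ} = tᵢ`, `e_i X_α = 0` otherwise, and `e_i t_j = |⟨αⱼ∨,αᵢ⟩| X_{αᵢ}`. -/
def eop (D : RootSystemData E I) (i : I) : V1 D →ₗ[ℚ] V1 D :=
  Finsupp.lift (V1 D) ℚ _ fun b =>
    match b with
    | Sum.inl a =>
        if h : (a : E) + D.simple i ∈ D.R then
          ((D.q i (a : E) : ℚ) + 1) • X1 D ⟨(a : E) + D.simple i, h⟩
        else if (a : E) = -(D.simple i) then t1 D i
        else 0
    | Sum.inr j =>
        ((|D.pair (D.simple j) (D.simple i)| : ℤ) : ℚ) •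
          X1 D ⟨D.simple i, D.simple_mem i⟩

open Classical in
/-- The operator `f_i` on `V₁`: `f_i X_α = (p_{i,α}+1) X_{α-αᵢ}` if `α-αᵢ ∈ R`,
`f_i X_{αᵢ} = tᵢ`, `f_i X_α = 0` otherwise, and `f_i t_j = |⟨αⱼ∨,αᵢ⟩| X_{-αᵢ}`. -/
def fop (D : RootSystemData E I) (i : I) : V1 D →ₗ[ℚ] V1 D :=
  Finsupp.lift (V1 D) ℚ _ fun b =>
    match b with
    | Sum.inl a =>
        if h : (a : E) - D.simple i ∈ D.R then
          ((D.p i (a : E) : ℚ) + 1) • X1 D ⟨(a : E) - D.simple i, h⟩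
        else if (a : E) = D.simple i then t1 D i
        else 0
    | Sum.inr j =>
        ((|D.pair (D.simple j) (D.simple i)| : ℤ) : ℚ) •
          X1 D ⟨-(D.simple i), D.neg_mem (D.simple i) (D.simple_mem i)⟩


variable {D : RootSystemData E I} {i : I}

open Classical in
lemma eop_X (D : RootSystemData E I) (i : I) (a : {x : E // x ∈ D.R}) :
    eop D i (X1 D a) =
      if h : (a : E) + D.simple i ∈ D.R then
        ((D.q i (a : E) : ℚ) + 1) • X1 D ⟨(a : E) + D.simple i, h⟩
      else if (a : E) = -(D.simple i) then t1 D i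
      else 0 := by
  simp [eop, X1, Finsupp.lift_apply, Finsupp.sum_single_index]

open Classical in
lemma eop_t (D : RootSystemData E I) (i : I) (j : I) :
    eop D i (t1 D j) = ((|D.pair (D.simple j) (D.simple i)| : ℤ) : ℚ) •
      X1 D ⟨D.simple i, D.simple_mem i⟩ := by
  simp [eop, t1, Finsupp.lift_apply, Finsupp.sum_single_index]

open Classical in
lemma fop_X (D : RootSystemData E I) (i : I) (a : {x : E // x ∈ D.R}) :
    fop D i (X1 D a) =
      if h : (a : E) - D.simple i ∈ D.R then
        ((D.p i (a : E) : ℚ) + 1) • X1 D ⟨(a : E) - D.simple i, h⟩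
      else if (a : E) = D.simple i then t1 D i
      else 0 := by
  simp [fop, X1, Finsupp.lift_apply, Finsupp.sum_single_index]

open Classical in
lemma fop_t (D : RootSystemData E I) (i : I) (j : I) :
    fop D i (t1 D j) = ((|D.pair (D.simple j) (D.simple i)| : ℤ) : ℚ) •
      X1 D ⟨-(D.simple i), D.neg_mem (D.simple i) (D.simple_mem i)⟩ := by
  simp [fop, t1, Finsupp.lift_apply, Finsupp.sum_single_index]

lemma two_smul_not_mem (D : RootSystemData E I) (i : I) :
    D.simple i + D.simple i ∉ D.R := by
  intro h
  have h2 : (2 : ℝ) • D.simple i ∈ D.R := by rwa [two_smul]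
  rcases D.reduced (D.simple i) (D.simple_mem i) 2 h2 with h | h <;> norm_num at h

lemma neg_two_smul_not_mem (D : RootSystemData E I) (i : I) :
    -(D.simple i) - D.simple i ∉ D.R := by
  intro h
  have h2 : (-2 : ℝ) • D.simple i ∈ D.R := by
    have : -(D.simple i) - D.simple i = (-2 : ℝ) • D.simple i := by
      rw [show ((-2 : ℝ)) = -(2:ℝ) by norm_num, neg_smul, two_smul]; abel
    rwa [← this]
  rcases D.reduced (D.simple i) (D.simple_mem i) (-2) h2 with h | h <;> norm_num at h

lemma simple_ne_zero (D : RootSystemData E I) (i : I) : D.simple i ≠ 0 :=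
  D.mem_ne_zero (D.simple_mem i)

lemma simple_ne_neg (D : RootSystemData E I) (i : I) :
    D.simple i ≠ -(D.simple i) := by
  intro h
  apply simple_ne_zero D i
  have h2 : (2 : ℝ) • D.simple i = 0 := by
    rw [two_smul]
    nth_rewrite 1 [h]
    exact neg_add_cancel _
  rcases smul_eq_zero.mp h2 with h' | h'
  · norm_num at h'
  · exact h'

lemma neg_simple_ne_simple (D : RootSystemData E I) (i : I) :
    -(D.simple i) ≠ D.simple i := fun h => simple_ne_neg D i h.symm

lemma eop_X_simple (D : RootSystemData E I) (i : I) :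
    eop D i (X1 D ⟨D.simple i, D.simple_mem i⟩) = 0 := by
  rw [eop_X]
  rw [dif_neg (two_smul_not_mem D i), if_neg (simple_ne_neg D i)]

lemma fop_X_neg_simple (D : RootSystemData E I) (i : I) :
    fop D i (X1 D ⟨-(D.simple i), D.neg_mem (D.simple i) (D.simple_mem i)⟩) = 0 := by
  rw [fop_X]
  rw [dif_neg (neg_two_smul_not_mem D i), if_neg (neg_simple_ne_simple D i)]

/-- If `α` and `α + 4αᵢ` are both roots and `α` is not proportional to `αᵢ`,
we get a contradiction, since the Cartan integers would differ by 8. -/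
lemma string_e (D : RootSystemData E I) (i : I) {α : E} (hα : α ∈ D.R)
    (hnp : ∀ r : ℝ, α ≠ r • D.simple i)
    (h4 : α + D.simple i + D.simple i + D.simple i + D.simple i ∈ D.R) : False := by
  set s := D.simple i with hs
  have hform : α + s + s + s + s = α + (4 : ℝ) • s := by
    rw [show ((4:ℝ)) = 1+1+1+1 by norm_num]
    simp [add_smul, one_smul]; abel
  rw [hform] at h4
  have hnp4 : ∀ r : ℝ, α + (4 : ℝ) • s ≠ r • s := by
    intro r hr
    exact hnp (r - 4) (by rw [sub_smul]; exact eq_sub_of_add_eq hr)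
  have hb0 := abs_le.mp (D.pair_abs_le (D.simple_mem i) hα hnp)
  have hb4 := abs_le.mp (D.pair_abs_le (D.simple_mem i) h4 hnp4)
  have e0 := D.pair_def s (D.simple_mem i) α hα
  have e4 := D.pair_def s (D.simple_mem i) (α + (4:ℝ) • s) h4
  have hinner : ⟪s, α + (4:ℝ) • s⟫ = ⟪s, α⟫ + 4 * ⟪s, s⟫ := by
    rw [inner_add_right, real_inner_smul_right]
  have hS := D.inner_self_pos (D.simple_mem i)
  have hcast : ((D.pair s (α + (4:ℝ) • s) : ℝ)) = (D.pair s α : ℝ) + 8 := by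
    have h8 : ((D.pair s (α + (4:ℝ) • s) : ℝ)) * ⟪s, s⟫ =
        ((D.pair s α : ℝ) + 8) * ⟪s, s⟫ := by
      rw [e4, hinner]; nlinarith [e0]
    exact mul_right_cancel₀ hS.ne' h8
  have hint : D.pair s (α + (4:ℝ) • s) = D.pair s α + 8 := by exact_mod_cast hcast
  rw [← hs] at hb0 hb4
  omega

lemma string_f (D : RootSystemData E I) (i : I) {α : E} (hα : α ∈ D.R)
    (hnp : ∀ r : ℝ, α ≠ r • D.simple i)
    (h4 : α - D.simple i - D.simple i - D.simple i - D.simple i ∈ D.R) : False := by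
  set s := D.simple i with hs
  have hform : α - s - s - s - s = α + ((-4) : ℝ) • s := by
    rw [show ((-4:ℝ)) = -(1+1+1+1) by norm_num, neg_smul]
    simp [add_smul, one_smul]; abel
  rw [hform] at h4
  have hnp4 : ∀ r : ℝ, α + (-4 : ℝ) • s ≠ r • s := by
    intro r hr
    apply hnp (r + 4)
    have h' : α = r • s - (-4 : ℝ) • s := eq_sub_of_add_eq hr
    rw [h', add_smul, neg_smul]
    abel
  have hb0 := abs_le.mp (D.pair_abs_le (D.simple_mem i) hα hnp)
  have hb4 := abs_le.mp (D.pair_abs_le (D.simple_mem i) h4 hnp4)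
  have e0 := D.pair_def s (D.simple_mem i) α hα
  have e4 := D.pair_def s (D.simple_mem i) (α + (-4:ℝ) • s) h4
  have hinner : ⟪s, α + (-4:ℝ) • s⟫ = ⟪s, α⟫ + (-4) * ⟪s, s⟫ := by
    rw [inner_add_right, real_inner_smul_right]
  have hS := D.inner_self_pos (D.simple_mem i)
  have hcast : ((D.pair s (α + (-4:ℝ) • s) : ℝ)) = (D.pair s α : ℝ) - 8 := by
    have h8 : ((D.pair s (α + (-4:ℝ) • s) : ℝ)) * ⟪s, s⟫ =
        ((D.pair s α : ℝ) - 8) * ⟪s, s⟫ := by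
      rw [e4, hinner]; nlinarith [e0]
    exact mul_right_cancel₀ hS.ne' h8
  have hint : D.pair s (α + (-4:ℝ) • s) = D.pair s α - 8 := by exact_mod_cast hcast
  rw [← hs] at hb0 hb4
  omega

lemma nonprop_add (D : RootSystemData E I) (i : I) {α : E}
    (h : ∀ r : ℝ, α ≠ r • D.simple i) :
    ∀ r : ℝ, α + D.simple i ≠ r • D.simple i := by
  intro r hr
  exact h (r - 1) (by rw [sub_smul, one_smul]; exact eq_sub_of_add_eq hr)

lemma nonprop_sub (D : RootSystemData E I) (i : I) {α : E}
    (h : ∀ r : ℝ, α ≠ r • D.simple i) :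
    ∀ r : ℝ, α - D.simple i ≠ r • D.simple i := by
  intro r hr
  exact h (r + 1) (by rw [add_smul, one_smul, ← hr]; abel)

lemma eop_X_dead (D : RootSystemData E I) (i : I) (a : {x : E // x ∈ D.R})
    (hnr : (a : E) + D.simple i ∉ D.R) (hnp : ∀ r : ℝ, (a : E) ≠ r • D.simple i) :
    eop D i (X1 D a) = 0 := by
  rw [eop_X, dif_neg hnr, if_neg (fun h => hnp (-1) (by rw [neg_one_smul]; exact h))]

lemma fop_X_dead (D : RootSystemData E I) (i : I) (a : {x : E // x ∈ D.R})
    (hnr : (a : E) - D.simple i ∉ D.R) (hnp : ∀ r : ℝ, (a : E) ≠ r • D.simple i) :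
    fop D i (X1 D a) = 0 := by
  rw [fop_X, dif_neg hnr, if_neg (fun h => hnp 1 (by rw [one_smul]; exact h))]

lemma eop4_X (D : RootSystemData E I) (i : I) (a : {x : E // x ∈ D.R}) :
    eop D i (eop D i (eop D i (eop D i (X1 D a)))) = 0 := by
  by_cases hprop : ∃ r : ℝ, (a : E) = r • D.simple i
  · obtain ⟨r, hr⟩ := hprop
    have hmem : r • D.simple i ∈ D.R := hr ▸ a.2
    rcases D.reduced (D.simple i) (D.simple_mem i) r hmem with h1 | h1
    · have ha : a = ⟨D.simple i, D.simple_mem i⟩ :=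
        Subtype.ext (by rw [hr, h1, one_smul])
      rw [ha, eop_X_simple, map_zero, map_zero, map_zero]
    · have hneg : (a : E) = -(D.simple i) := by rw [hr, h1, neg_one_smul]
      have e1 : eop D i (X1 D a) = t1 D i := by
        rw [eop_X, dif_neg, if_pos hneg]
        rw [hneg, neg_add_cancel]
        exact D.zero_not_mem
      rw [e1, eop_t, map_smul, eop_X_simple, smul_zero, map_zero]
  · push_neg at hprop
    by_cases h1 : (a : E) + D.simple i ∈ D.R
    · have e1 : eop D i (X1 D a) = ((D.q i (a : E) : ℚ) + 1) •
          X1 D ⟨(a : E) + D.simple i, h1⟩ := by rw [eop_X, dif_pos h1]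
      have hp1 := nonprop_add D i hprop
      rw [e1, map_smul, map_smul, map_smul]
      by_cases h2 : (a : E) + D.simple i + D.simple i ∈ D.R
      · have e2 : eop D i (X1 D ⟨(a : E) + D.simple i, h1⟩) =
            ((D.q i ((a : E) + D.simple i) : ℚ) + 1) •
            X1 D ⟨(a : E) + D.simple i + D.simple i, h2⟩ := by rw [eop_X, dif_pos h2]
        have hp2 := nonprop_add D i hp1
        rw [e2, map_smul, map_smul]
        by_cases h3 : (a : E) + D.simple i + D.simple i + D.simple i ∈ D.R
        · have e3 : eop D i (X1 D ⟨(a : E) + D.simple i + D.simple i, h2⟩) =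
              ((D.q i ((a : E) + D.simple i + D.simple i) : ℚ) + 1) •
              X1 D ⟨(a : E) + D.simple i + D.simple i + D.simple i, h3⟩ := by
            rw [eop_X, dif_pos h3]
          have hp3 := nonprop_add D i hp2
          rw [e3, map_smul]
          by_cases h4 : (a : E) + D.simple i + D.simple i + D.simple i + D.simple i ∈ D.R
          · exact absurd h4 (fun h => string_e D i a.2 hprop h)
          · rw [eop_X_dead D i _ h4 hp3]; simp
        · rw [eop_X_dead D i _ h3 hp2]; simp
      · rw [eop_X_dead D i _ h2 hp1]; simp
    · rw [eop_X_dead D i a h1 hprop, map_zero, map_zero, map_zero]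

lemma fop4_X (D : RootSystemData E I) (i : I) (a : {x : E // x ∈ D.R}) :
    fop D i (fop D i (fop D i (fop D i (X1 D a)))) = 0 := by
  by_cases hprop : ∃ r : ℝ, (a : E) = r • D.simple i
  · obtain ⟨r, hr⟩ := hprop
    have hmem : r • D.simple i ∈ D.R := hr ▸ a.2
    rcases D.reduced (D.simple i) (D.simple_mem i) r hmem with h1 | h1
    · have hpos : (a : E) = D.simple i := by rw [hr, h1, one_smul]
      have e1 : fop D i (X1 D a) = t1 D i := by
        rw [fop_X, dif_neg, if_pos hpos]
        rw [hpos, sub_self]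
        exact D.zero_not_mem
      rw [e1, fop_t, map_smul, fop_X_neg_simple, smul_zero, map_zero]
    · have ha : a = ⟨-(D.simple i), D.neg_mem (D.simple i) (D.simple_mem i)⟩ :=
        Subtype.ext (by rw [hr, h1, neg_one_smul])
      rw [ha, fop_X_neg_simple, map_zero, map_zero, map_zero]
  · push_neg at hprop
    by_cases h1 : (a : E) - D.simple i ∈ D.R
    · have e1 : fop D i (X1 D a) = ((D.p i (a : E) : ℚ) + 1) •
          X1 D ⟨(a : E) - D.simple i, h1⟩ := by rw [fop_X, dif_pos h1]
      have hp1 := nonprop_sub D i hprop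
      rw [e1, map_smul, map_smul, map_smul]
      by_cases h2 : (a : E) - D.simple i - D.simple i ∈ D.R
      · have e2 : fop D i (X1 D ⟨(a : E) - D.simple i, h1⟩) =
            ((D.p i ((a : E) - D.simple i) : ℚ) + 1) •
            X1 D ⟨(a : E) - D.simple i - D.simple i, h2⟩ := by rw [fop_X, dif_pos h2]
        have hp2 := nonprop_sub D i hp1
        rw [e2, map_smul, map_smul]
        by_cases h3 : (a : E) - D.simple i - D.simple i - D.simple i ∈ D.R
        · have e3 : fop D i (X1 D ⟨(a : E) - D.simple i - D.simple i, h2⟩) =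
              ((D.p i ((a : E) - D.simple i - D.simple i) : ℚ) + 1) •
              X1 D ⟨(a : E) - D.simple i - D.simple i - D.simple i, h3⟩ := by
            rw [fop_X, dif_pos h3]
          have hp3 := nonprop_sub D i hp2
          rw [e3, map_smul]
          by_cases h4 : (a : E) - D.simple i - D.simple i - D.simple i - D.simple i ∈ D.R
          · exact absurd h4 (fun h => string_f D i a.2 hprop h)
          · rw [fop_X_dead D i _ h4 hp3]; simp
        · rw [fop_X_dead D i _ h3 hp2]; simp
      · rw [fop_X_dead D i _ h2 hp1]; simp
    · rw [fop_X_dead D i a h1 hprop, map_zero, map_zero, map_zero]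

lemma eop4_t (D : RootSystemData E I) (i : I) (j : I) :
    eop D i (eop D i (eop D i (eop D i (t1 D j)))) = 0 := by
  rw [eop_t, map_smul, eop_X_simple, smul_zero, map_zero, map_zero]

lemma fop4_t (D : RootSystemData E I) (i : I) (j : I) :
    fop D i (fop D i (fop D i (fop D i (t1 D j)))) = 0 := by
  rw [fop_t, map_smul, fop_X_neg_simple, smul_zero, map_zero, map_zero]

/-- For every `i ∈ I`, the operators `e_i`, `f_i` on `V₁` satisfy
`e_i⁴ = 0` and `f_i⁴ = 0`. -/
theorem stmt16 {E : Type} [NormedAddCommGroup E] [InnerProductSpace ℝ E]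
    [FiniteDimensional ℝ E] {I : Type} [Fintype I]
    (D : RootSystemData E I) (i : I) :
    eop D i ^ 4 = 0 ∧ fop D i ^ 4 = 0 := by
  constructor
  · apply Finsupp.lhom_ext
    intro b c
    have hb : Finsupp.single b c = c • Finsupp.single b (1:ℚ) := by
      rw [Finsupp.smul_single, smul_eq_mul, mul_one]
    rw [hb, map_smul, map_smul]
    have : (eop D i ^ 4) (Finsupp.single b (1:ℚ)) = 0 := by
      have hpow : (eop D i ^ 4) (Finsupp.single b (1:ℚ)) =
          eop D i (eop D i (eop D i (eop D i (Finsupp.single b (1:ℚ))))) := by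
        simp [pow_succ, Module.End.mul_apply]
      rw [hpow]
      cases b with
      | inl a => exact eop4_X D i a
      | inr j => exact eop4_t D i j
    rw [this, smul_zero, LinearMap.zero_apply, smul_zero]
  · apply Finsupp.lhom_ext
    intro b c
    have hb : Finsupp.single b c = c • Finsupp.single b (1:ℚ) := by
      rw [Finsupp.smul_single, smul_eq_mul, mul_one]
    rw [hb, map_smul, map_smul]
    have : (fop D i ^ 4) (Finsupp.single b (1:ℚ)) = 0 := by
      have hpow : (fop D i ^ 4) (Finsupp.single b (1:ℚ)) =
          fop D i (fop D i (fop D i (fop D i (Finsupp.single b (1:ℚ))))) := by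
        simp [pow_succ, Module.End.mul_apply]
      rw [hpow]
      cases b with
      | inl a => exact fop4_X D i a
      | inr j => exact fop4_t D i j
    rw [this, smul_zero, LinearMap.zero_apply, smul_zero]
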